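/- (Theorem 2.1, Simple Selection-Adjusted Procedure.) Let P = (P_1,...,P_m) be independent families of p-values. Let S(P) ⊆ {1,...,m} be a simple selection rule, and let R = |S(P)|. Suppose that for each selected family i an error-controlling procedure is applied at level Rq/m, so that the error variable C_i ≥ 0 (taking values in a countable set) satisfies E(C_i) ≤ kq/m conditionally on any configuration in which k families are selected, and C_i = 0 whenever family i is not selected. Then E( Σ_{i∈S(P)} C_i / max(|S(P)|,1) ) ≤ q. -/

import Mathlib

open MeasureTheory
open scoped ENNReal

/-- Theorem 2.1 (Simple Selection-Adjusted Procedure).  The p-value configurations of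
the `m` families are independent (product measure over the family spaces `E i`).
`S` is a simple selection rule: for a selected family `i`, changing only the family-`i`
p-values in a way that keeps `i` selected does not change the number of selected
families.  The error variable `C i` is nonnegative, takes values in a countable set,
vanishes when family `i` is not selected, and the `E(𝒞)`-controlling procedure applied
at level `kq/m` within each selected family guarantees, conditionally on any
configuration of the other families under which selection of `i` entails exactly `k`
selected families, that `E(C i) ≤ kq/m`.  Then the expected average error over the
selected families is at most `q`. -/
theorem stmt8 {m : ℕ} (hm : 1 ≤ m) {E : Fin m → Type*} [∀ i, MeasurableSpace (E i)]
    (ν : ∀ i, Measure (E i)) [∀ i, IsProbabilityMeasure (ν i)]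
    (q : ℝ) (hq : 0 < q)
    (S : (∀ i, E i) → Finset (Fin m))
    (hSmeas : ∀ i, MeasurableSet {x | i ∈ S x})
    (hScard : Measurable fun x => (S x).card)
    (hsimple : ∀ (x : ∀ j, E j) (i : Fin m), i ∈ S x →
      ∀ y : ∀ j, E j, (∀ j, j ≠ i → y j = x j) → i ∈ S y → (S y).card = (S x).card)
    (C : Fin m → (∀ j, E j) → ℝ)
    (hCmeas : ∀ i, Measurable (C i))
    (hCnonneg : ∀ i x, 0 ≤ C i x)
    (hCcount : ∀ i, (Set.range (C i)).Countable)
    (hCzero : ∀ i x, i ∉ S x → C i x = 0)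
    (hcontrol : ∀ (i : Fin m) (x : ∀ j, E j) (k : ℕ),
      (∀ p : E i, i ∈ S (Function.update x i p) → (S (Function.update x i p)).card = k) →
      (∫ p, C i (Function.update x i p) ∂ ν i) ≤ k * q / m) :
    (∫ x, (∑ i ∈ S x, C i x) / ((max (S x).card 1 : ℕ) : ℝ) ∂ Measure.pi ν) ≤ q := by
  classical
  set π := Measure.pi ν with hπ
  set g : Fin m → (∀ j, E j) → ℝ :=
    fun i x => C i x / ((max (S x).card 1 : ℕ) : ℝ) with hg
  have hm0 : (m : ℝ) ≠ 0 := by positivity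
  have hD1 : ∀ x : ∀ j, E j, (1 : ℝ) ≤ ((max (S x).card 1 : ℕ) : ℝ) := by
    intro x; exact_mod_cast le_max_right (S x).card 1
  have hD0 : ∀ x : ∀ j, E j, (0 : ℝ) < ((max (S x).card 1 : ℕ) : ℝ) :=
    fun x => lt_of_lt_of_le one_pos (hD1 x)
  have hDm : ∀ x : ∀ j, E j, ((max (S x).card 1 : ℕ) : ℝ) ≤ (m : ℝ) := by
    intro x
    have h1 : (S x).card ≤ m := by
      simpa using Finset.card_le_card (Finset.subset_univ (S x))
    exact_mod_cast max_le h1 hm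
  have hgnn : ∀ i x, 0 ≤ g i x := fun i x => div_nonneg (hCnonneg i x) (hD0 x).le
  have hDmeas : Measurable fun x : ∀ j, E j => ((max (S x).card 1 : ℕ) : ℝ) := by
    have : Measurable fun n : ℕ => ((max n 1 : ℕ) : ℝ) := measurable_from_top
    exact this.comp hScard
  have hgmeas : ∀ i, Measurable (g i) := fun i => (hCmeas i).div hDmeas
  have hfg : ∀ x : ∀ j, E j,
      (∑ i ∈ S x, C i x) / ((max (S x).card 1 : ℕ) : ℝ) = ∑ i : Fin m, g i x := by
    intro x
    rw [Finset.sum_subset (Finset.subset_univ (S x)) (fun i _ hi => hCzero i x hi),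
      Finset.sum_div]
  have hfmeas : Measurable fun x : ∀ j, E j =>
      (∑ i ∈ S x, C i x) / ((max (S x).card 1 : ℕ) : ℝ) := by
    simp only [hfg]
    exact Finset.measurable_sum _ fun i _ => hgmeas i
  have hfnn : ∀ x : ∀ j, E j,
      0 ≤ (∑ i ∈ S x, C i x) / ((max (S x).card 1 : ℕ) : ℝ) := by
    intro x; rw [hfg]; exact Finset.sum_nonneg fun i _ => hgnn i x
  by_cases hint : Integrable
      (fun x => (∑ i ∈ S x, C i x) / ((max (S x).card 1 : ℕ) : ℝ)) π
  swap
  · rw [integral_undef hint]; exact hq.le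
  -- each `C i` is integrable since `C i x ≤ m * f x`
  have hCle : ∀ i x, C i x ≤ (m : ℝ) *
      ((∑ j ∈ S x, C j x) / ((max (S x).card 1 : ℕ) : ℝ)) := by
    intro i x
    have h1 : g i x ≤ (∑ j ∈ S x, C j x) / ((max (S x).card 1 : ℕ) : ℝ) := by
      rw [hfg]
      exact Finset.single_le_sum (fun j _ => hgnn j x) (Finset.mem_univ i)
    have h2 : C i x = g i x * ((max (S x).card 1 : ℕ) : ℝ) := by
      rw [hg]; field_simp
    rw [h2, mul_comm (m : ℝ) _]
    exact mul_le_mul h1 (hDm x) (hD0 x).le (hfnn x)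
  have hCint : ∀ i, Integrable (C i) π := by
    intro i
    refine (hint.const_mul (m : ℝ)).mono' (hCmeas i).aestronglyMeasurable ?_
    filter_upwards with x
    rw [Real.norm_eq_abs, abs_of_nonneg (hCnonneg i x)]
    exact hCle i x
  -- key per-coordinate estimate
  have key : ∀ i : Fin m,
      ∫⁻ x, ENNReal.ofReal (g i x) ∂π ≤ ENNReal.ofReal (q / m) := by
    intro i
    haveI hne : Nonempty (E i) := by
      by_contra h
      rw [not_nonempty_iff] at h
      have h1 : (ν i) Set.univ = 1 := measure_univ
      rw [Set.univ_eq_empty_iff.mpr h] at h1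
      simp at h1
    letI : Unique {j : Fin m // ¬ j ≠ i} :=
      ⟨⟨⟨i, not_not_intro rfl⟩⟩, fun a => Subtype.ext (not_not.mp a.2)⟩
    set e1 := MeasurableEquiv.piEquivPiSubtypeProd E (fun j => j ≠ i) with he1
    set e2 : (∀ j : {j : Fin m // ¬ j ≠ i}, E j.1) ≃ᵐ E i :=
      MeasurableEquiv.piUnique (fun j : {j : Fin m // ¬ j ≠ i} => E j.1) with he2
    set ψ : (∀ j, E j) ≃ᵐ (∀ j : {j : Fin m // j ≠ i}, E j.1) × E i :=
      e1.trans ((MeasurableEquiv.refl _).prodCongr e2) with hψ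
    set μ' : Measure (∀ j : {j : Fin m // j ≠ i}, E j.1) :=
      Measure.pi (fun j : {j : Fin m // j ≠ i} => ν j.1) with hμ'
    haveI : IsProbabilityMeasure μ' := by rw [hμ']; infer_instance
    have hmap : π.map ψ = μ'.prod (ν i) := by
      have h1 : π.map e1 = μ'.prod (Measure.pi fun j : {j : Fin m // ¬ j ≠ i} => ν j.1) :=
        (measurePreserving_piEquivPiSubtypeProd ν (fun j => j ≠ i)).map_eq
      have h2 : MeasurePreserving (Prod.map (@id (∀ j : {j : Fin m // j ≠ i}, E j.1)) e2)
          (μ'.prod (Measure.pi fun j : {j : Fin m // ¬ j ≠ i} => ν j.1)) (μ'.prod (ν i)) :=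
        (MeasurePreserving.id μ').prod (measurePreserving_piUnique _)
      calc π.map ψ
          = (π.map e1).map (Prod.map (@id (∀ j : {j : Fin m // j ≠ i}, E j.1)) e2) := by
            rw [Measure.map_map (by exact measurable_id.prodMap e2.measurable) e1.measurable]
            rfl
        _ = μ'.prod (ν i) := by rw [h1, h2.map_eq]
    have hψapp : ∀ x : ∀ j, E j, ψ x = (fun j : {j : Fin m // j ≠ i} => x j.1, x i) :=
      fun x => rfl
    have hslice : ∀ (y : ∀ j : {j : Fin m // j ≠ i}, E j.1) (p p' : E i),
        ψ.symm (y, p') = Function.update (ψ.symm (y, p)) i p' := by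
      intro y p p'
      have hx : ψ (ψ.symm (y, p)) = (y, p) := ψ.apply_symm_apply (y, p)
      rw [hψapp] at hx
      have h2 : ψ (Function.update (ψ.symm (y, p)) i p') = (y, p') := by
        rw [hψapp]
        rw [Prod.ext_iff] at hx ⊢
        refine ⟨?_, by simp [Function.update_self]⟩
        funext j
        simp only [Function.update_of_ne j.2]
        exact congrFun hx.1 j
      symm
      calc Function.update (ψ.symm (y, p)) i p'
          = ψ.symm (ψ (Function.update (ψ.symm (y, p)) i p')) := (ψ.symm_apply_apply _).symm
        _ = ψ.symm (y, p') := by rw [h2]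
    -- Fubini through ψ
    have hkey : ∀ h : (∀ j, E j) → ℝ≥0∞, Measurable h →
        ∫⁻ x, h x ∂π = ∫⁻ y, ∫⁻ p, h (ψ.symm (y, p)) ∂ν i ∂μ' := by
      intro h hh
      have h1 : ∫⁻ x, h x ∂π = ∫⁻ z, h (ψ.symm z) ∂(μ'.prod (ν i)) := by
        rw [← hmap, lintegral_map_equiv (fun z => h (ψ.symm z)) ψ]
        simp
      rw [h1, lintegral_prod (fun z => h (ψ.symm z)) ((hh.comp ψ.symm.measurable).aemeasurable)]
    have hkeyC := hkey (fun x => ENNReal.ofReal (C i x))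
      (ENNReal.measurable_ofReal.comp (hCmeas i))
    have hkeyG := hkey (fun x => ENNReal.ofReal (g i x))
      (ENNReal.measurable_ofReal.comp (hgmeas i))
    have hC1 : (∫⁻ y, ∫⁻ p, ENNReal.ofReal (C i (ψ.symm (y, p))) ∂ν i ∂μ') < ⊤ := by
      rw [← hkeyC]
      refine lt_of_le_of_lt (lintegral_mono fun x => ?_) (hCint i).2
      rw [← ofReal_norm_eq_enorm, Real.norm_eq_abs, abs_of_nonneg (hCnonneg i x)]
    have hmeasC : Measurable fun z : (∀ j : {j : Fin m // j ≠ i}, E j.1) × E i =>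
        ENNReal.ofReal (C i (ψ.symm z)) :=
      ENNReal.measurable_ofReal.comp ((hCmeas i).comp ψ.symm.measurable)
    have hae : ∀ᵐ y ∂μ', (∫⁻ p, ENNReal.ofReal (C i (ψ.symm (y, p))) ∂ν i) < ⊤ :=
      ae_lt_top (Measurable.lintegral_prod_right hmeasC) hC1.ne
    rw [hkeyG]
    have hbnd : ∀ᵐ y ∂μ',
        (∫⁻ p, ENNReal.ofReal (g i (ψ.symm (y, p))) ∂ν i) ≤ ENNReal.ofReal (q / m) := by
      filter_upwards [hae] with y hy
      obtain ⟨p₀⟩ := hne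
      set x₀ := ψ.symm (y, p₀) with hx₀
      have hupd : ∀ p : E i, ψ.symm (y, p) = Function.update x₀ i p :=
        fun p => hslice y p₀ p
      simp only [hupd] at hy ⊢
      set c : E i → ℝ := fun p => C i (Function.update x₀ i p) with hc
      have hcmeas : Measurable c := (hCmeas i).comp (measurable_update x₀)
      have hcint : Integrable c (ν i) := by
        refine ⟨hcmeas.aestronglyMeasurable, ?_⟩
        rw [hasFiniteIntegral_iff_norm]
        refine lt_of_le_of_lt (lintegral_mono fun p => ?_) hy
        rw [Real.norm_eq_abs, abs_of_nonneg (hCnonneg i _)]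
      by_cases hsel : ∃ p : E i, i ∈ S (Function.update x₀ i p)
      · obtain ⟨p₁, hp₁⟩ := hsel
        set k := (S (Function.update x₀ i p₁)).card with hk
        have hk1 : 1 ≤ k := Finset.card_pos.mpr ⟨i, hp₁⟩
        have hk0 : (k : ℝ) ≠ 0 := Nat.cast_ne_zero.mpr (by omega)
        have hkcard : ∀ p : E i, i ∈ S (Function.update x₀ i p) →
            (S (Function.update x₀ i p)).card = k := by
          intro p hp
          exact hsimple _ i hp₁ _
            (fun j hj => by rw [Function.update_of_ne hj, Function.update_of_ne hj]) hp
        have hbound := hcontrol i x₀ k hkcard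
        have hEq : ∀ p : E i, ENNReal.ofReal (g i (Function.update x₀ i p)) =
            ENNReal.ofReal (c p) * ENNReal.ofReal (1 / (k : ℝ)) := by
          intro p
          rw [← ENNReal.ofReal_mul (hCnonneg i _)]
          by_cases hp : i ∈ S (Function.update x₀ i p)
          · congr 1
            rw [hg]
            simp only
            rw [hkcard p hp, Nat.max_eq_left hk1, div_eq_mul_inv, one_div]
          · have h0 : C i (Function.update x₀ i p) = 0 := hCzero _ _ hp
            rw [hg]; simp only [hc, h0, zero_div, zero_mul]
        calc ∫⁻ p, ENNReal.ofReal (g i (Function.update x₀ i p)) ∂ν i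
            = (∫⁻ p, ENNReal.ofReal (c p) ∂ν i) * ENNReal.ofReal (1 / (k : ℝ)) := by
              simp only [hEq]
              rw [lintegral_mul_const (ENNReal.ofReal (1 / (k : ℝ)))
                (f := fun p => ENNReal.ofReal (c p))
                (ENNReal.measurable_ofReal.comp hcmeas)]
          _ = ENNReal.ofReal (∫ p, c p ∂ν i) * ENNReal.ofReal (1 / (k : ℝ)) := by
              rw [← ofReal_integral_eq_lintegral_ofReal hcint
                (Filter.Eventually.of_forall fun p => hCnonneg i _)]
          _ ≤ ENNReal.ofReal ((k : ℝ) * q / m) * ENNReal.ofReal (1 / (k : ℝ)) :=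
              mul_le_mul_left (ENNReal.ofReal_le_ofReal hbound) _
          _ = ENNReal.ofReal (q / m) := by
              rw [← ENNReal.ofReal_mul (div_nonneg (mul_nonneg (Nat.cast_nonneg _) hq.le) (Nat.cast_nonneg _))]
              congr 1
              field_simp
      · push_neg at hsel
        have h0 : ∀ p : E i, ENNReal.ofReal (g i (Function.update x₀ i p)) = 0 := by
          intro p
          rw [hg]; simp only [hCzero _ _ (hsel p), zero_div, ENNReal.ofReal_zero]
        simp only [h0, lintegral_zero]
        exact zero_le
    calc (∫⁻ y, ∫⁻ p, ENNReal.ofReal (g i (ψ.symm (y, p))) ∂ν i ∂μ')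
        ≤ ∫⁻ _, ENNReal.ofReal (q / m) ∂μ' := lintegral_mono_ae hbnd
      _ = ENNReal.ofReal (q / m) := by simp
  -- put it together
  rw [integral_eq_lintegral_of_nonneg_ae (Filter.Eventually.of_forall hfnn)
    hfmeas.aestronglyMeasurable]
  refine ENNReal.toReal_le_of_le_ofReal hq.le ?_
  have hsum : ∀ x : ∀ j, E j,
      ENNReal.ofReal ((∑ i ∈ S x, C i x) / ((max (S x).card 1 : ℕ) : ℝ)) =
        ∑ i : Fin m, ENNReal.ofReal (g i x) := by
    intro x
    rw [hfg x]
    exact ENNReal.ofReal_sum_of_nonneg fun i _ => hgnn i x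
  calc ∫⁻ x, ENNReal.ofReal ((∑ i ∈ S x, C i x) / ((max (S x).card 1 : ℕ) : ℝ)) ∂π
      = ∑ i : Fin m, ∫⁻ x, ENNReal.ofReal (g i x) ∂π := by
        simp only [hsum]
        exact lintegral_finset_sum _ fun i _ => ENNReal.measurable_ofReal.comp (hgmeas i)
    _ ≤ ∑ _i : Fin m, ENNReal.ofReal (q / m) := Finset.sum_le_sum fun i _ => key i
    _ = ENNReal.ofReal q := by
        rw [Finset.sum_const, Finset.card_univ, Fintype.card_fin, nsmul_eq_mul,
          ← ENNReal.ofReal_natCast m, ← ENNReal.ofReal_mul (by positivity)]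
        congr 1
        field_simp
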